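/- Let R be a semiprimitive commutative ring (Jac(R) = 0) with a principal maximal ideal m = Rt. Then ZA(R) is connected with diameter at most 4: for any two distinct nonzero nonunit elements x, y, there is a path of length at most 4 between them in ZA(R). -/

import Mathlib

private lemma mkset {R : Type*} [CommRing R] {a b : R}
    (h : ∀ r : R, r * a = 0 → r * b = 0 → r = 0) :
    {r : R | r * a = 0} ∩ {r : R | r * b = 0} = {0} := by
  ext r
  simp only [Set.mem_inter_iff, Set.mem_setOf_eq, Set.mem_singleton_iff]
  constructor
  · rintro ⟨h1, h2⟩; exact h r h1 h2
  · rintro rfl; simp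

theorem stmt9 {R : Type*} [CommRing R] [Nontrivial R]
    (hjac : Ideal.jacobson (⊥ : Ideal R) = ⊥)
    (m : Ideal R) (hm : m.IsMaximal) (t : R) (ht : m = Ideal.span {t})
    (x y : R) (hx0 : x ≠ 0) (hxu : ¬ IsUnit x) (hy0 : y ≠ 0) (hyu : ¬ IsUnit y)
    (hxy : x ≠ y) :
    ∃ p : List R,
      p.Chain' (fun a b => a ≠ b ∧ {r : R | r * a = 0} ∩ {r : R | r * b = 0} = {0}) ∧
      (∀ a ∈ p, a ≠ 0 ∧ ¬ IsUnit a) ∧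
      p.head? = some x ∧ p.getLast? = some y ∧ p.length ≤ 5 := by
  classical
  have htm : t ∈ m := by rw [ht]; exact Ideal.mem_span_singleton_self t
  have ht0 : t ≠ 0 := by
    rintro rfl
    have hmbot : m = ⊥ := by rw [ht]; simp
    have hxnm : x ∉ m := by rw [hmbot]; simpa using hx0
    obtain ⟨z, i, hi, hzi⟩ := hm.exists_inv hxnm
    rw [hmbot] at hi
    simp only [Ideal.mem_bot] at hi
    subst hi
    exact hxu (IsUnit.of_mul_eq_one (a := x) z (by linear_combination hzi))
  have htu : ¬ IsUnit t := by
    intro h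
    exact hm.ne_top (by rw [ht]; exact Ideal.span_singleton_eq_top.mpr h)
  -- Claim A : vertices outside m are adjacent to t
  have claimA : ∀ v : R, v ∉ m → ∀ z : R, z * t = 0 → z * v = 0 → z = 0 := by
    intro v hv z hzt hzv
    by_contra hz
    have hzm : z ∉ m := by
      intro hzm'
      have hzj : z ∈ Ideal.jacobson (⊥ : Ideal R) := by
        rw [Ideal.jacobson]
        refine Ideal.mem_sInf.mpr ?_
        rintro J ⟨-, hJ⟩
        by_cases hT : t ∈ J
        · have hle : m ≤ J := by
            rw [ht]; exact (Ideal.span_singleton_le_iff_mem _).mpr hT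
          have := hm.eq_of_le hJ.ne_top hle
          exact this ▸ hzm'
        · rcases hJ.isPrime.mem_or_mem (show z * t ∈ J by rw [hzt]; exact J.zero_mem) with h | h
          · exact h
          · exact absurd h hT
      rw [hjac] at hzj
      exact hz (by simpa using hzj)
    rcases hm.isPrime.mem_or_mem (show z * v ∈ m by rw [hzv]; exact m.zero_mem) with h | h
    · exact hzm h
    · exact hv h
  -- construction of the auxiliary neighbour c of a vertex v
  have getc : ∀ v : R, v ≠ 0 → ¬ IsUnit v →
      ∃ c : R, c ≠ 0 ∧ ¬ IsUnit c ∧ (v ∈ m → c ∉ m) ∧ ∀ z : R, z * v = 0 → z * c = z := by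
    intro v hv0 hvu
    have hvj : v ∉ Ideal.jacobson (⊥ : Ideal R) := by rw [hjac]; simpa using hv0
    rw [Ideal.mem_jacobson_bot] at hvj
    push_neg at hvj
    obtain ⟨s, hs⟩ := hvj
    refine ⟨v * s + 1, ?_, hs, ?_, ?_⟩
    · intro h0
      exact hvu (IsUnit.of_mul_eq_one (a := v) (-s) (by linear_combination -h0))
    · intro hvm hcm
      have h1 : (1 : R) ∈ m := by
        have h2 : v * s ∈ m := m.mul_mem_right s hvm
        have h3 := m.sub_mem hcm h2
        simpa using h3
      exact hm.ne_top ((Ideal.eq_top_iff_one m).mpr h1)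
    · intro z hz
      have : z * (v * s + 1) = z * v * s + z := by ring
      rw [this, hz, zero_mul, zero_add]
  by_cases hxm : x ∈ m
  · by_cases hxt : x = t
    · -- x = t
      by_cases hym : y ∈ m
      · -- y ∈ m, y ≠ t (since x ≠ y) : path [x, c_y, y]
        have hyt : y ≠ t := fun h => hxy (hxt.trans h.symm)
        obtain ⟨c, hc0, hcu, hcm, hcann⟩ := getc y hy0 hyu
        have hcnm : c ∉ m := hcm hym
        refine ⟨[x, c, y], ?_, ?_, rfl, by simp, by simp⟩
        · refine List.isChain_cons_cons.mpr ⟨⟨fun h => hcnm (h ▸ hxm), mkset ?_⟩,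
            List.isChain_cons_cons.mpr ⟨⟨fun h => hcnm (h ▸ hym), mkset ?_⟩, List.isChain_singleton y⟩⟩
          · intro r h1 h2
            exact claimA c hcnm r (by rw [← hxt]; exact h1) h2
          · intro r h1 h2
            have := hcann r h2
            rw [h1] at this; exact this.symm
        · intro a ha
          simp only [List.mem_cons, List.not_mem_nil, or_false] at ha
          rcases ha with rfl | rfl | rfl
          exacts [⟨hx0, hxu⟩, ⟨hc0, hcu⟩, ⟨hy0, hyu⟩]
      · -- y ∉ m : path [x, y]
        refine ⟨[x, y], ?_, ?_, rfl, by simp, by simp⟩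
        · refine List.isChain_cons_cons.mpr ⟨⟨hxy, mkset ?_⟩, List.isChain_singleton y⟩
          intro r h1 h2
          exact claimA y hym r (by rw [← hxt]; exact h1) h2
        · intro a ha
          simp only [List.mem_cons, List.not_mem_nil, or_false] at ha
          rcases ha with rfl | rfl
          exacts [⟨hx0, hxu⟩, ⟨hy0, hyu⟩]
    · -- x ∈ m, x ≠ t
      obtain ⟨cx, hcx0, hcxu, hcxm, hcxann⟩ := getc x hx0 hxu
      have hcxnm : cx ∉ m := hcxm hxm
      have adjxcx : x ≠ cx ∧ {r : R | r * x = 0} ∩ {r : R | r * cx = 0} = {0} := by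
        refine ⟨fun h => hcxnm (h ▸ hxm), mkset ?_⟩
        intro r h1 h2
        have := hcxann r h1
        rw [h2] at this; exact this.symm
      have adjcxt : cx ≠ t ∧ {r : R | r * cx = 0} ∩ {r : R | r * t = 0} = {0} := by
        refine ⟨fun h => hcxnm (h ▸ htm), mkset ?_⟩
        intro r h1 h2
        exact claimA cx hcxnm r h2 h1
      by_cases hym : y ∈ m
      · by_cases hyt : y = t
        · -- path [x, cx, y] with y = t
          refine ⟨[x, cx, y], ?_, ?_, rfl, by simp, by simp⟩
          · refine List.isChain_cons_cons.mpr ⟨adjxcx, List.isChain_cons_cons.mpr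
              ⟨⟨fun h => hcxnm (h ▸ hym), mkset ?_⟩, List.isChain_singleton y⟩⟩
            intro r h1 h2
            exact claimA cx hcxnm r (by rw [← hyt]; exact h2) h1
          · intro a ha
            simp only [List.mem_cons, List.not_mem_nil, or_false] at ha
            rcases ha with rfl | rfl | rfl
            exacts [⟨hx0, hxu⟩, ⟨hcx0, hcxu⟩, ⟨hy0, hyu⟩]
        · -- path [x, cx, t, cy, y]
          obtain ⟨cy, hcy0, hcyu, hcym, hcyann⟩ := getc y hy0 hyu
          have hcynm : cy ∉ m := hcym hym
          refine ⟨[x, cx, t, cy, y], ?_, ?_, rfl, by simp, by simp⟩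
          · refine List.isChain_cons_cons.mpr ⟨adjxcx, List.isChain_cons_cons.mpr ⟨adjcxt,
              List.isChain_cons_cons.mpr ⟨⟨fun h => hcynm (h ▸ htm), mkset ?_⟩,
              List.isChain_cons_cons.mpr ⟨⟨fun h => hcynm (h ▸ hym), mkset ?_⟩,
              List.isChain_singleton y⟩⟩⟩⟩
            · intro r h1 h2
              exact claimA cy hcynm r h1 h2
            · intro r h1 h2
              have := hcyann r h2
              rw [h1] at this; exact this.symm
          · intro a ha
            simp only [List.mem_cons, List.not_mem_nil, or_false] at ha
            rcases ha with rfl | rfl | rfl | rfl | rfl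
            exacts [⟨hx0, hxu⟩, ⟨hcx0, hcxu⟩, ⟨ht0, htu⟩, ⟨hcy0, hcyu⟩, ⟨hy0, hyu⟩]
      · -- y ∉ m : path [x, cx, t, y]
        refine ⟨[x, cx, t, y], ?_, ?_, rfl, by simp, by simp⟩
        · refine List.isChain_cons_cons.mpr ⟨adjxcx, List.isChain_cons_cons.mpr ⟨adjcxt,
            List.isChain_cons_cons.mpr ⟨⟨fun h => hym (h ▸ htm), mkset ?_⟩,
            List.isChain_singleton y⟩⟩⟩
          intro r h1 h2
          exact claimA y hym r h1 h2
        · intro a ha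
          simp only [List.mem_cons, List.not_mem_nil, or_false] at ha
          rcases ha with rfl | rfl | rfl | rfl
          exacts [⟨hx0, hxu⟩, ⟨hcx0, hcxu⟩, ⟨ht0, htu⟩, ⟨hy0, hyu⟩]
  · -- x ∉ m
    have hxt : x ≠ t := fun h => hxm (h ▸ htm)
    have adjxt : x ≠ t ∧ {r : R | r * x = 0} ∩ {r : R | r * t = 0} = {0} := by
      refine ⟨hxt, mkset ?_⟩
      intro r h1 h2
      exact claimA x hxm r h2 h1
    by_cases hym : y ∈ m
    · by_cases hyt : y = t
      · -- path [x, y]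
        refine ⟨[x, y], ?_, ?_, rfl, by simp, by simp⟩
        · refine List.isChain_cons_cons.mpr ⟨⟨hxy, mkset ?_⟩, List.isChain_singleton y⟩
          intro r h1 h2
          exact claimA x hxm r (by rw [← hyt]; exact h2) h1
        · intro a ha
          simp only [List.mem_cons, List.not_mem_nil, or_false] at ha
          rcases ha with rfl | rfl
          exacts [⟨hx0, hxu⟩, ⟨hy0, hyu⟩]
      · -- path [x, t, cy, y]
        obtain ⟨cy, hcy0, hcyu, hcym, hcyann⟩ := getc y hy0 hyu
        have hcynm : cy ∉ m := hcym hym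
        refine ⟨[x, t, cy, y], ?_, ?_, rfl, by simp, by simp⟩
        · refine List.isChain_cons_cons.mpr ⟨adjxt, List.isChain_cons_cons.mpr
            ⟨⟨fun h => hcynm (h.symm ▸ htm), mkset ?_⟩,
            List.isChain_cons_cons.mpr ⟨⟨fun h => hcynm (h ▸ hym), mkset ?_⟩,
            List.isChain_singleton y⟩⟩⟩
          · intro r h1 h2
            exact claimA cy hcynm r h1 h2
          · intro r h1 h2
            have := hcyann r h2
            rw [h1] at this; exact this.symm
        · intro a ha
          simp only [List.mem_cons, List.not_mem_nil, or_false] at ha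
          rcases ha with rfl | rfl | rfl | rfl
          exacts [⟨hx0, hxu⟩, ⟨ht0, htu⟩, ⟨hcy0, hcyu⟩, ⟨hy0, hyu⟩]
    · -- y ∉ m : path [x, t, y]
      refine ⟨[x, t, y], ?_, ?_, rfl, by simp, by simp⟩
      · refine List.isChain_cons_cons.mpr ⟨adjxt, List.isChain_cons_cons.mpr
          ⟨⟨fun h => hym (h ▸ htm), mkset ?_⟩, List.isChain_singleton y⟩⟩
        intro r h1 h2
        exact claimA y hym r h1 h2
      · intro a ha
        simp only [List.mem_cons, List.not_mem_nil, or_false] at ha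
        rcases ha with rfl | rfl | rfl
        exacts [⟨hx0, hxu⟩, ⟨ht0, htu⟩, ⟨hy0, hyu⟩]
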